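/- If X, Y are independent nonnegative random variables, then E[ln(1 + X/(Y+1))] = ∫₀^∞ (L_Y(z) − L_X(z)·L_Y(z)) · e^{−z}/z dz, where L_X(z) = E[e^{−zX}] and L_Y(z) = E[e^{−zY}] are the Laplace transforms of X and Y. -/

import Mathlib

open MeasureTheory ProbabilityTheory Real Set

lemma aux_exp_int {t : ℝ} (ht : 0 < t) :
    ∫ z in Set.Ioi (0:ℝ), Real.exp (-t * z) = 1 / t := by
  have h := integral_comp_mul_left_Ioi (fun x => Real.exp (-x)) 0 ht
  simp only [mul_zero, smul_eq_mul] at h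
  rw [show (fun z => Real.exp (-t * z)) = (fun z => Real.exp (-(t * z))) by
    funext z; ring_nf]
  rw [h, integral_exp_neg_Ioi_zero]
  simp [one_div]

lemma aux_interval {a b z : ℝ} (hz : 0 < z) (hab : a ≤ b) :
    ∫ t in Set.Ioc a b, Real.exp (-t * z) = (Real.exp (-a * z) - Real.exp (-b * z)) / z := by
  rw [← intervalIntegral.integral_of_le hab]
  have h1 : (z * ∫ t in a..b, (fun x => Real.exp (-x)) (t * z)) =
      ∫ x in a * z..b * z, Real.exp (-x) := intervalIntegral.mul_integral_comp_mul_right (f := fun x => Real.exp (-x)) (c := z) (a := a) (b := b)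
  have h2 : ∫ x in a * z..b * z, Real.exp (-x) = Real.exp (-(a*z)) - Real.exp (-(b*z)) := by
    rw [intervalIntegral.integral_comp_neg (fun x => Real.exp x), integral_exp]
  simp only at h1
  have h3 : (∫ t in a..b, Real.exp (-t * z)) = (∫ t in a..b, Real.exp (-(t * z))) := by
    congr 1; funext t; ring_nf
  rw [h3]
  field_simp
  rw [h1, h2, mul_comm a z, mul_comm b z]

lemma aux_prod_int {a b : ℝ} (ha : 0 < a) (hab : a ≤ b) :
    Integrable (Function.uncurry fun t z => Real.exp (-t * z))
      ((volume.restrict (Set.Ioc a b)).prod (volume.restrict (Set.Ioi (0:ℝ)))) := by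
  have hmeas : AEStronglyMeasurable (Function.uncurry fun t z : ℝ => Real.exp (-t * z))
      ((volume.restrict (Set.Ioc a b)).prod (volume.restrict (Set.Ioi (0:ℝ)))) := by
    apply Continuous.aestronglyMeasurable
    exact (continuous_fst.neg.mul continuous_snd).rexp
  rw [integrable_prod_iff hmeas]
  constructor
  · filter_upwards [ae_restrict_mem measurableSet_Ioc] with t ht
    exact exp_neg_integrableOn_Ioi 0 (ha.trans ht.1)
  · have h14 : Integrable (fun t : ℝ => 1 / t) (volume.restrict (Set.Ioc a b)) := by
      have hc : ContinuousOn (fun t : ℝ => 1 / t) (Set.Icc a b) :=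
        continuousOn_const.div continuousOn_id fun x hx => (ha.trans_le hx.1).ne'
      exact (hc.integrableOn_compact isCompact_Icc).mono_set Set.Ioc_subset_Icc_self
    refine h14.congr ?_
    filter_upwards [ae_restrict_mem measurableSet_Ioc] with t ht
    have ht0 : 0 < t := ha.trans ht.1
    rw [show (fun z : ℝ => ‖Function.uncurry (fun t z : ℝ => Real.exp (-t * z)) (t, z)‖)
        = fun z : ℝ => Real.exp (-t * z) by funext z; simp [Function.uncurry, abs_exp]]
    exact (aux_exp_int ht0).symm

lemma frullani {a b : ℝ} (ha : 0 < a) (hab : a ≤ b) :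
    (IntegrableOn (fun z => (Real.exp (-a * z) - Real.exp (-b * z)) / z) (Set.Ioi (0:ℝ))) ∧
    ∫ z in Set.Ioi (0:ℝ), (Real.exp (-a * z) - Real.exp (-b * z)) / z
      = Real.log b - Real.log a := by
  have hb : 0 < b := lt_of_lt_of_le ha hab
  have hprod := aux_prod_int ha hab
  have hswap := integral_integral_swap hprod
  have hIoc : ∀ᵐ t ∂(volume.restrict (Set.Ioc a b)), t ∈ Set.Ioc a b :=
    ae_restrict_mem measurableSet_Ioc
  have hL : (∫ t in Set.Ioc a b, ∫ z in Set.Ioi (0:ℝ), Real.exp (-t * z))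
      = Real.log b - Real.log a := by
    rw [setIntegral_congr_ae measurableSet_Ioc
      (Filter.Eventually.of_forall fun t (ht : t ∈ Set.Ioc a b) => aux_exp_int (ha.trans ht.1))]
    rw [← intervalIntegral.integral_of_le hab, integral_one_div, log_div hb.ne' ha.ne']
    intro h
    rcases h with h
    simp [Set.uIcc_of_le hab] at h
    linarith [h.1]
  have hR : (∫ z in Set.Ioi (0:ℝ), ∫ t in Set.Ioc a b, Real.exp (-t * z))
      = ∫ z in Set.Ioi (0:ℝ), (Real.exp (-a * z) - Real.exp (-b * z)) / z := by
    refine setIntegral_congr_ae measurableSet_Ioi (Filter.Eventually.of_forall fun z hz => ?_)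
    exact aux_interval hz hab
  constructor
  · have h1 := hprod.integral_prod_right
    refine h1.congr ?_
    filter_upwards [ae_restrict_mem measurableSet_Ioi] with z hz
    exact aux_interval hz hab
  · rw [← hR, ← hswap, hL]

lemma bdd_int {α : Type*} [MeasurableSpace α] {μ : Measure α} [IsProbabilityMeasure μ]
    {f : α → ℝ} (hm : AEStronglyMeasurable f μ) (h : ∀ ω, ‖f ω‖ ≤ 1) : Integrable f μ :=
  (integrable_const (1:ℝ)).mono' hm (Filter.Eventually.of_forall h)

/-- **Hamdi's lemma.** For independent nonnegative random variables `X` and `Y`,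
`E[ln(1 + X/(Y+1))] = ∫₀^∞ (L_Y(z) − L_X(z) L_Y(z)) e^{−z}/z dz`, where
`L_X(z) = E[e^{−zX}]` and `L_Y(z) = E[e^{−zY}]`. -/
theorem hamdi_lemma {Ω : Type*} [MeasureSpace Ω] {μ : Measure Ω} [IsProbabilityMeasure μ]
    (X Y : Ω → ℝ) (hX : Measurable X) (hY : Measurable Y)
    (hXpos : ∀ ω, 0 ≤ X ω) (hYpos : ∀ ω, 0 ≤ Y ω)
    (hindep : IndepFun X Y μ)
    (hint : Integrable (fun ω => Real.log (1 + X ω / (Y ω + 1))) μ) :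
    (∫ ω, Real.log (1 + X ω / (Y ω + 1)) ∂μ)
      = ∫ z in Set.Ioi (0:ℝ),
          ((∫ ω, Real.exp (-z * Y ω) ∂μ)
            - (∫ ω, Real.exp (-z * X ω) ∂μ) * (∫ ω, Real.exp (-z * Y ω) ∂μ))
            * Real.exp (-z) / z := by
  set ρ := volume.restrict (Set.Ioi (0:ℝ)) with hρ
  set f : Ω → ℝ → ℝ := fun ω z =>
    (Real.exp (-(Y ω + 1) * z) - Real.exp (-(X ω + Y ω + 1) * z)) / z with hf
  have hA : ∀ ω, 0 < Y ω + 1 := fun ω => by linarith [hYpos ω]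
  have hB : ∀ ω, 0 < X ω + Y ω + 1 := fun ω => by linarith [hXpos ω, hYpos ω]
  have hAB : ∀ ω, Y ω + 1 ≤ X ω + Y ω + 1 := fun ω => by linarith [hXpos ω]
  have hfr := fun ω => frullani (hA ω) (hAB ω)
  have hglog : ∀ ω, Real.log (1 + X ω / (Y ω + 1))
      = Real.log (X ω + Y ω + 1) - Real.log (Y ω + 1) := by
    intro ω
    have h1 : 1 + X ω / (Y ω + 1) = (X ω + Y ω + 1) / (Y ω + 1) := by
      rw [eq_div_iff (hA ω).ne', add_mul, one_mul, div_mul_cancel₀ _ (hA ω).ne']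
      ring
    rw [h1, Real.log_div (hB ω).ne' (hA ω).ne']
  have hfval : ∀ ω, (∫ z, f ω z ∂ρ) = Real.log (1 + X ω / (Y ω + 1)) := by
    intro ω
    rw [hρ, (hfr ω).2, hglog ω]
  have hfnonneg : ∀ ω, ∀ z ∈ Set.Ioi (0:ℝ), 0 ≤ f ω z := by
    intro ω z hz
    have hz0 : (0:ℝ) < z := hz
    apply div_nonneg _ hz0.le
    have : -(X ω + Y ω + 1) * z ≤ -(Y ω + 1) * z := by nlinarith [hXpos ω]
    simpa using Real.exp_le_exp.2 this
  have hFm : AEStronglyMeasurable (Function.uncurry f) (μ.prod ρ) := by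
    apply Measurable.aestronglyMeasurable
    apply Measurable.div _ measurable_snd
    apply Measurable.sub
    · exact Real.measurable_exp.comp
        ((((hY.comp measurable_fst).add measurable_const).neg).mul measurable_snd)
    · exact Real.measurable_exp.comp
        (((((hX.comp measurable_fst).add (hY.comp measurable_fst)).add
          measurable_const).neg).mul measurable_snd)
  have hFint : Integrable (Function.uncurry f) (μ.prod ρ) := by
    rw [integrable_prod_iff hFm]
    constructor
    · exact Filter.Eventually.of_forall fun ω => (hfr ω).1
    · have hnorm : ∀ ω, (∫ z, ‖Function.uncurry f (ω, z)‖ ∂ρ)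
          = Real.log (1 + X ω / (Y ω + 1)) := by
        intro ω
        rw [← hfval ω]
        rw [hρ]
        refine setIntegral_congr_ae measurableSet_Ioi
          (Filter.Eventually.of_forall fun z hz => ?_)
        exact norm_of_nonneg (hfnonneg ω z hz)
      exact hint.congr (Filter.Eventually.of_forall fun ω => (hnorm ω).symm)
  have hswap := integral_integral_swap hFint
  have hL : (∫ ω, ∫ z, f ω z ∂ρ ∂μ) = ∫ ω, Real.log (1 + X ω / (Y ω + 1)) ∂μ :=
    integral_congr_ae (Filter.Eventually.of_forall fun ω => hfval ω)
  have hinner : ∀ z ∈ Set.Ioi (0:ℝ), (∫ ω, f ω z ∂μ)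
      = ((∫ ω, Real.exp (-z * Y ω) ∂μ)
          - (∫ ω, Real.exp (-z * X ω) ∂μ) * (∫ ω, Real.exp (-z * Y ω) ∂μ))
          * Real.exp (-z) / z := by
    intro z hz
    have hz0 : (0:ℝ) < z := hz
    have e1 : ∀ ω, f ω z = (Real.exp (-z * Y ω) * Real.exp (-z)
        - (Real.exp (-z * X ω) * Real.exp (-z * Y ω)) * Real.exp (-z)) / z := by
      intro ω
      show (Real.exp (-(Y ω + 1) * z) - Real.exp (-(X ω + Y ω + 1) * z)) / z = _
      rw [show -(Y ω + 1) * z = -z * Y ω + -z by ring,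
        show -(X ω + Y ω + 1) * z = (-z * X ω + -z * Y ω) + -z by ring,
        Real.exp_add, Real.exp_add, Real.exp_add]
    have hbd : ∀ c : ℝ, 0 ≤ c → ‖Real.exp (-z * c)‖ ≤ 1 := by
      intro c hc
      rw [Real.norm_eq_abs, Real.abs_exp]
      exact Real.exp_le_one_iff.2 (by nlinarith)
    have iX : Integrable (fun ω => Real.exp (-z * X ω)) μ :=
      bdd_int (Real.measurable_exp.comp (hX.const_mul (-z))).aestronglyMeasurable
        fun ω => hbd _ (hXpos ω)
    have iY : Integrable (fun ω => Real.exp (-z * Y ω)) μ :=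
      bdd_int (Real.measurable_exp.comp (hY.const_mul (-z))).aestronglyMeasurable
        fun ω => hbd _ (hYpos ω)
    have iXY : Integrable (fun ω => Real.exp (-z * X ω) * Real.exp (-z * Y ω)) μ := by
      refine bdd_int ((Real.measurable_exp.comp (hX.const_mul (-z))).mul
        (Real.measurable_exp.comp (hY.const_mul (-z)))).aestronglyMeasurable fun ω => ?_
      rw [norm_mul]
      calc ‖Real.exp (-z * X ω)‖ * ‖Real.exp (-z * Y ω)‖
          ≤ 1 * 1 := by
            apply mul_le_mul (hbd _ (hXpos ω)) (hbd _ (hYpos ω)) (norm_nonneg _) zero_le_one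
        _ = 1 := mul_one 1
    have hind2 : IndepFun (fun ω => Real.exp (-z * X ω)) (fun ω => Real.exp (-z * Y ω)) μ :=
      hindep.comp (Real.measurable_exp.comp (measurable_id.const_mul (-z)))
        (Real.measurable_exp.comp (measurable_id.const_mul (-z)))
    have hmul := hind2.integral_fun_mul_eq_mul_integral iX.aestronglyMeasurable iY.aestronglyMeasurable
    rw [integral_congr_ae (Filter.Eventually.of_forall e1), integral_div,
      integral_sub (iY.mul_const _) (iXY.mul_const _),
      integral_mul_const, integral_mul_const, hmul]
    ring
  have hR : (∫ z, ∫ ω, f ω z ∂μ ∂ρ)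
      = ∫ z in Set.Ioi (0:ℝ),
          ((∫ ω, Real.exp (-z * Y ω) ∂μ)
            - (∫ ω, Real.exp (-z * X ω) ∂μ) * (∫ ω, Real.exp (-z * Y ω) ∂μ))
            * Real.exp (-z) / z := by
    rw [hρ]
    exact setIntegral_congr_ae measurableSet_Ioi
      (Filter.Eventually.of_forall fun z hz => hinner z hz)
  rw [← hL, hswap, hR]
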